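/- Let D be a nonprincipal ultrafilter on ℕ and N ≥ 1. For each j < N let (q^j_m)_{m<ω} be a sequence of LE-conditions in Q_{d,s,k} with q^j_m = (d,s,φ^j_m), and let φ^j_∞ be such that (d,s,φ^j_∞) is an LE-condition and for every n ∈ ℕ the set {m ∈ ℕ : φ^j_m(n) = φ^j_∞(n)} belongs to D. If r is an LE-condition with r ≤ (d,s,φ^j_∞) in the extension order for every j < N, then the set {m ∈ ℕ : there exists an LE-condition that is ≤ r and ≤ q^j_m for every j < N} belongs to D. -/

import Mathlib

open scoped Classical

/-- An LE-condition for the poset `LE_b`: a triple `(d, s, φ)` where `d` is a finite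
binary sequence, `s n < b n` for `n < |d|`, `φ n ⊆ {0,…,b n − 1}`, and for some `k`,
`|φ n| ≤ b n · 2^{−n/2^k}` for all `n ≥ |d|`. -/
structure LECond (b : ℕ → ℕ) where
  d : List Bool
  s : ℕ → ℕ
  φ : ℕ → Finset ℕ
  s_lt : ∀ n < d.length, s n < b n
  φ_sub : ∀ n, φ n ⊆ Finset.range (b n)
  bound : ∃ k : ℕ, ∀ n, d.length ≤ n →
    ((φ n).card : ℝ) ≤ (b n : ℝ) * (2 : ℝ) ^ (-(n : ℝ) / (2 : ℝ) ^ k)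

/-- Membership in `Q_k`: the witness `k` works. -/
def LECond.inQ {b : ℕ → ℕ} (p : LECond b) (k : ℕ) : Prop :=
  ∀ n, p.d.length ≤ n →
    ((p.φ n).card : ℝ) ≤ (b n : ℝ) * (2 : ℝ) ^ (-(n : ℝ) / (2 : ℝ) ^ k)

/-- Membership in `Q_{d,s,k}`: in `Q_k` with first two coordinates `d`, `s`. -/
def LECond.inQds {b : ℕ → ℕ} (p : LECond b) (d : List Bool) (s : ℕ → ℕ) (k : ℕ) : Prop :=
  p.d = d ∧ (∀ n < d.length, p.s n = s n) ∧ p.inQ k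

/-- The extension order on LE-conditions: `q ≤ p`. -/
def LECond.le {b : ℕ → ℕ} (q p : LECond b) : Prop :=
  p.d <+: q.d ∧ (∀ n < p.d.length, q.s n = p.s n) ∧ (∀ n, p.φ n ⊆ q.φ n) ∧
  ∀ n, q.d.getD n false = true → ¬ (p.d.getD n false = true) → q.s n ∉ p.φ n

/-- `d` is long for `k`: `|d| ≥ 2` and `2^{−n/2^k} ≤ 1/(n²(n+1)²)` for all `n ≥ |d|`. -/
def LongFor (k : ℕ) (d : List Bool) : Prop :=
  2 ≤ d.length ∧ ∀ n : ℕ, d.length ≤ n →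
    (2 : ℝ) ^ (-(n : ℝ) / (2 : ℝ) ^ k) ≤ 1 / ((n : ℝ) ^ 2 * ((n : ℝ) + 1) ^ 2)

lemma rpow_mono_aux (n : ℕ) {k1 k2 : ℕ} (h : k1 ≤ k2) :
    (2:ℝ) ^ (-(n:ℝ) / (2:ℝ) ^ k1) ≤ (2:ℝ) ^ (-(n:ℝ) / (2:ℝ) ^ k2) := by
  apply Real.rpow_le_rpow_of_exponent_le one_le_two
  rw [neg_div, neg_div, neg_le_neg_iff]
  exact div_le_div_of_nonneg_left (by positivity) (by positivity)
    (pow_le_pow_right₀ one_le_two h)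


/-- The key property of `D`-limits in `Q_{d,s,k}` (forcing-free form of `D`-lim-linked):
if `r` extends the `D`-limits `(d,s,φ^j_∞)` of the sequences `(q j m)_m` for all `j < N`,
then the set of `m` such that `r` and all `q j m` (`j < N`) have a common extension
belongs to `D`. -/
theorem stmt9 (b : ℕ → ℕ) (hb : ∀ n, 2 ^ n ≤ b n)
    (d : List Bool) (s : ℕ → ℕ) (k : ℕ)
    (D : Ultrafilter ℕ) (hD : ∀ m : ℕ, D ≠ pure m)
    (N : ℕ) (hN : 1 ≤ N)
    (q : ℕ → ℕ → LECond b) (hq : ∀ j < N, ∀ m, (q j m).inQds d s k)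
    (pinf : ℕ → LECond b)
    (hpd : ∀ j < N, (pinf j).d = d)
    (hps : ∀ j < N, ∀ n < d.length, (pinf j).s n = s n)
    (hlim : ∀ j < N, ∀ n : ℕ, {m : ℕ | (q j m).φ n = (pinf j).φ n} ∈ D)
    (r : LECond b) (hr : ∀ j < N, r.le (pinf j)) :
    {m : ℕ | ∃ q' : LECond b, q'.le r ∧ ∀ j < N, q'.le (q j m)} ∈ D := by
  obtain ⟨kr, hkr⟩ := r.bound
  set K : ℕ := max kr k with hK
  set L : ℕ := max (2 ^ (K + 1) * (N + 1)) r.d.length with hL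
  have hLr : r.d.length ≤ L := le_max_right _ _
  have hdr : d <+: r.d := by
    have := (hr 0 hN).1; rwa [hpd 0 hN] at this
  have hdlen : d.length ≤ r.d.length := hdr.length_le
  -- the D-large set
  have hS : {m : ℕ | ∀ n < L, ∀ j < N, (q j m).φ n = (pinf j).φ n} ∈ D := by
    have : (⋂ n ∈ Finset.range L, ⋂ j ∈ Finset.range N,
        {m : ℕ | (q j m).φ n = (pinf j).φ n}) ∈ D := by
      apply (Filter.biInter_finset_mem _).mpr
      intro n _
      apply (Filter.biInter_finset_mem _).mpr
      intro j hj
      exact hlim j (Finset.mem_range.mp hj) n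
    apply Filter.mem_of_superset this
    intro m hm
    simp only [Set.mem_iInter, Set.mem_setOf_eq] at hm ⊢
    intro n hn j hj
    exact hm n (Finset.mem_range.mpr hn) j (Finset.mem_range.mpr hj)
  apply Filter.mem_of_superset hS
  intro m hm
  simp only [Set.mem_setOf_eq] at hm ⊢
  -- build the common extension
  set d' : List Bool := r.d ++ List.replicate (L - r.d.length) false with hd'
  have hd'len : d'.length = L := by
    simp only [hd', List.length_append, List.length_replicate]; omega
  have hgetD : ∀ n, d'.getD n false = true → n < r.d.length ∧ r.d.getD n false = true := by
    intro n hn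
    rcases lt_or_ge n r.d.length with h | h
    · rw [hd', List.getD_append _ _ _ _ h] at hn; exact ⟨h, hn⟩
    · exfalso
      rcases lt_or_ge n d'.length with h2 | h2
      · rw [hd', List.getD_append_right _ _ _ _ h] at hn
        simp [List.getD] at hn
      · rw [List.getD_eq_default _ _ h2] at hn
        exact Bool.false_ne_true hn
  have hbpos : ∀ n, 0 < b n := fun n => lt_of_lt_of_le (by positivity :
    0 < 2 ^ n) (hb n)
  refine ⟨⟨d', fun n => if n < r.d.length then r.s n else 0,
      fun n => r.φ n ∪ (Finset.range N).biUnion (fun j => (q j m).φ n), ?_, ?_, ?_⟩, ?_, ?_⟩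
  · intro n _
    by_cases h : n < r.d.length
    · simpa [h] using r.s_lt n h
    · simpa [h] using hbpos n
  · intro n
    apply Finset.union_subset (r.φ_sub n)
    apply Finset.biUnion_subset.mpr
    intro j _
    exact (q j m).φ_sub n
  · -- the bound
    refine ⟨K + 1, ?_⟩
    intro n hn
    simp only [hd'len] at hn
    have hnr : r.d.length ≤ n := le_trans hLr hn
    have hnd : ∀ j < N, d.length ≤ n := fun _ _ => le_trans hdlen hnr
    have hcard : (((r.φ n ∪ (Finset.range N).biUnion fun j => (q j m).φ n)).card : ℝ)
        ≤ (r.φ n).card + N * ((b n : ℝ) * (2:ℝ) ^ (-(n:ℝ) / (2:ℝ) ^ k)) := by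
      have h1 : ((r.φ n ∪ (Finset.range N).biUnion fun j => (q j m).φ n)).card
          ≤ (r.φ n).card + ∑ j ∈ Finset.range N, ((q j m).φ n).card :=
        le_trans (Finset.card_union_le _ _)
          (Nat.add_le_add_left Finset.card_biUnion_le _)
      calc (((r.φ n ∪ (Finset.range N).biUnion fun j => (q j m).φ n)).card : ℝ)
          ≤ ((r.φ n).card : ℝ) + ∑ j ∈ Finset.range N, (((q j m).φ n).card : ℝ) := by
            exact_mod_cast h1
        _ ≤ ((r.φ n).card : ℝ) + N * ((b n : ℝ) * (2:ℝ) ^ (-(n:ℝ) / (2:ℝ) ^ k)) := by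
            apply (add_le_add_iff_left _).mpr
            have hsum : ∑ j ∈ Finset.range N, (((q j m).φ n).card : ℝ)
                ≤ ∑ _j ∈ Finset.range N, ((b n : ℝ) * (2:ℝ) ^ (-(n:ℝ) / (2:ℝ) ^ k)) := by
              apply Finset.sum_le_sum
              intro j hj
              have hjN := Finset.mem_range.mp hj
              exact (hq j hjN m).2.2 n (by rw [(hq j hjN m).1]; exact hnd j hjN)
            simpa [Finset.sum_const, Finset.card_range, nsmul_eq_mul] using hsum
    have hr1 : ((r.φ n).card : ℝ) ≤ (b n : ℝ) * (2:ℝ) ^ (-(n:ℝ) / (2:ℝ) ^ K) :=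
      le_trans (hkr n hnr)
        (mul_le_mul_of_nonneg_left (rpow_mono_aux n (le_max_left kr k)) (by positivity))
    have hq1 : (2:ℝ) ^ (-(n:ℝ) / (2:ℝ) ^ k) ≤ (2:ℝ) ^ (-(n:ℝ) / (2:ℝ) ^ K) :=
      rpow_mono_aux n (le_max_right _ _)
    have hmain : ((N : ℝ) + 1) * ((2:ℝ) ^ (-(n:ℝ) / (2:ℝ) ^ K))
        ≤ (2:ℝ) ^ (-(n:ℝ) / (2:ℝ) ^ (K + 1)) := by
      have hNle : ((N : ℝ) + 1) ≤ (2:ℝ) ^ ((n:ℝ) / (2:ℝ) ^ (K + 1)) := by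
        have h1 : ((N:ℝ) + 1) ≤ (2:ℝ) ^ ((N:ℝ) + 1) := by
          have := Nat.lt_two_pow_self (n := N + 1)
          have h2 : ((N + 1 : ℕ) : ℝ) ≤ ((2 ^ (N + 1) : ℕ) : ℝ) := by exact_mod_cast this.le
          calc ((N:ℝ) + 1) = ((N + 1 : ℕ) : ℝ) := by push_cast; ring
            _ ≤ ((2 ^ (N + 1) : ℕ) : ℝ) := h2
            _ = (2:ℝ) ^ ((N:ℝ) + 1) := by
                rw [show ((N:ℝ) + 1) = ((N + 1 : ℕ) : ℝ) by push_cast; ring,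
                  Real.rpow_natCast]; push_cast; ring
        apply le_trans h1
        apply Real.rpow_le_rpow_of_exponent_le one_le_two
        rw [le_div_iff₀ (by positivity)]
        have hLn : (2 ^ (K + 1) * (N + 1) : ℕ) ≤ n := le_trans (le_max_left _ _) hn
        have : ((2 ^ (K + 1) * (N + 1) : ℕ) : ℝ) ≤ (n : ℝ) := by exact_mod_cast hLn
        push_cast at this
        nlinarith [this]
      have key : (2:ℝ) ^ (-(n:ℝ) / (2:ℝ) ^ K)
          = (2:ℝ) ^ (-(n:ℝ) / (2:ℝ) ^ (K + 1)) * (2:ℝ) ^ (-(n:ℝ) / (2:ℝ) ^ (K + 1)) := by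
        rw [← Real.rpow_add (by norm_num)]
        congr 1
        rw [pow_succ]
        have h2K : ((2:ℝ) ^ K) ≠ 0 := by positivity
        field_simp
        ring
      rw [key]
      calc ((N : ℝ) + 1) * ((2:ℝ) ^ (-(n:ℝ) / (2:ℝ) ^ (K + 1)) * (2:ℝ) ^ (-(n:ℝ) / (2:ℝ) ^ (K + 1)))
          ≤ (2:ℝ) ^ ((n:ℝ) / (2:ℝ) ^ (K + 1)) *
            ((2:ℝ) ^ (-(n:ℝ) / (2:ℝ) ^ (K + 1)) * (2:ℝ) ^ (-(n:ℝ) / (2:ℝ) ^ (K + 1))) :=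
            mul_le_mul_of_nonneg_right hNle (by positivity)
        _ = (2:ℝ) ^ (-(n:ℝ) / (2:ℝ) ^ (K + 1)) := by
            rw [← mul_assoc, ← Real.rpow_add (by norm_num),
              show ((n:ℝ) / (2:ℝ) ^ (K + 1) + -(n:ℝ) / (2:ℝ) ^ (K + 1)) = 0 by ring,
              Real.rpow_zero, one_mul]
    calc (((r.φ n ∪ (Finset.range N).biUnion fun j => (q j m).φ n)).card : ℝ)
        ≤ ((r.φ n).card : ℝ) + N * ((b n : ℝ) * (2:ℝ) ^ (-(n:ℝ) / (2:ℝ) ^ k)) := hcard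
      _ ≤ (b n : ℝ) * (2:ℝ) ^ (-(n:ℝ) / (2:ℝ) ^ K)
          + N * ((b n : ℝ) * (2:ℝ) ^ (-(n:ℝ) / (2:ℝ) ^ K)) :=
          add_le_add hr1 (mul_le_mul_of_nonneg_left
            (mul_le_mul_of_nonneg_left hq1 (by positivity)) (by positivity))
      _ = (b n : ℝ) * (((N:ℝ) + 1) * (2:ℝ) ^ (-(n:ℝ) / (2:ℝ) ^ K)) := by ring
      _ ≤ (b n : ℝ) * (2:ℝ) ^ (-(n:ℝ) / (2:ℝ) ^ (K + 1)) :=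
          mul_le_mul_of_nonneg_left hmain (by positivity)
  · -- q' ≤ r
    refine ⟨List.prefix_append _ _, ?_, fun n => Finset.subset_union_left, ?_⟩
    · intro n hn; simp only [if_pos hn]
    · intro n h1 h2
      obtain ⟨hlt, heq⟩ := hgetD n h1
      exact absurd heq h2
  · -- q' ≤ q j m
    intro j hj
    obtain ⟨hqd, hqs, hqQ⟩ := hq j hj m
    obtain ⟨hrd, hrs, hrφ, hrnew⟩ := hr j hj
    refine ⟨?_, ?_, ?_, ?_⟩
    · rw [hqd]; exact hdr.trans (List.prefix_append _ _)
    · intro n hn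
      rw [hqd] at hn
      have hnr : n < r.d.length := lt_of_lt_of_le hn hdlen
      simp only [if_pos hnr]
      rw [hqs n hn]
      rw [hrs n (by rw [hpd j hj]; exact hn), hps j hj n hn]
    · intro n
      apply Finset.Subset.trans _ Finset.subset_union_right
      intro x hx
      exact Finset.mem_biUnion.mpr ⟨j, Finset.mem_range.mpr hj, hx⟩
    · intro n h1 h2
      obtain ⟨hlt, heq⟩ := hgetD n h1
      rw [hqd] at h2
      have hnd : d.length ≤ n := by
        by_contra hc
        push_neg at hc
        apply h2
        rw [List.getD_eq_getElem _ _ hc]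
        have hgl : d[n] = r.d[n]'hlt := hdr.getElem hc
        rw [List.getD_eq_getElem _ _ hlt] at heq
        rw [hgl]; exact heq
      have hpinf : ¬ ((pinf j).d.getD n false = true) := by
        rw [List.getD_eq_default _ _ (by rw [hpd j hj]; exact hnd)]
        simp
      have := hrnew n heq hpinf
      simp only [if_pos hlt]
      rw [hm n (lt_of_lt_of_le hlt hLr) j hj]
      exact this
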